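/- Let s be such that 2s is a positive integer, and let p(z) be a solution of the confluent Heun equation z(z-1)p''(z) + (3 - 2z(2s+1) + 2z²s)p'(z) + (2 - l(l+1) + 6s - 2zs(2s+1))p(z) = 0 (family G7). Then p₁(z) := z^{-4}p(z), whenever p(z) = z⁴p₁(z) for some function p₁, satisfies the confluent Heun equation z(z-1)p₁''(z) + (-5 - 2z(2s-3) + 2z²s)p₁'(z) + (6 - l(l+1) - 10s - 2zs(2s-3))p₁(z) = 0 (family G3). That is: p₁ solves the G3 equation if and only if z⁴p₁ solves the G7 equation. -/

import Mathlib

/-- The homotopic transformation `p(z) = z⁴p₁(z)` relating the confluent Heun equations of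
the Kovacic families G7 and G3: `p₁` solves the G3 equation iff `z⁴p₁` solves the G7
equation. -/
theorem stmt_9 (s l : ℝ) (N : ℕ) (hNpos : 0 < N) (hN : (N : ℝ) = 2 * s)
    (p₁ : ℝ → ℝ) (hp₁ : ContDiff ℝ 2 p₁) :
    (∀ z : ℝ,
      z * (z - 1) * deriv (deriv p₁) z +
        (-5 - 2 * z * (2 * s - 3) + 2 * z ^ 2 * s) * deriv p₁ z +
        (6 - l * (l + 1) - 10 * s - 2 * z * s * (2 * s - 3)) * p₁ z = 0) ↔
    (∀ z : ℝ,
      z * (z - 1) * deriv (deriv fun x => x ^ 4 * p₁ x) z +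
        (3 - 2 * z * (2 * s + 1) + 2 * z ^ 2 * s) * deriv (fun x => x ^ 4 * p₁ x) z +
        (2 - l * (l + 1) + 6 * s - 2 * z * s * (2 * s + 1)) * (z ^ 4 * p₁ z) = 0) := by
  have hd1 : ContDiff ℝ 1 (deriv p₁) := by
    have h : ContDiff ℝ ((1 : ℕ∞) + 1) p₁ := by norm_num; exact hp₁
    exact (contDiff_succ_iff_deriv.mp h).2.2
  have hdiff : Differentiable ℝ p₁ := hp₁.differentiable (by norm_num)
  have hdiff1 : Differentiable ℝ (deriv p₁) := hd1.differentiable (by norm_num)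
  have hc0 : Continuous p₁ := hp₁.continuous
  have hc1 : Continuous (deriv p₁) := hd1.continuous
  have hc2 : Continuous (deriv (deriv p₁)) := hd1.continuous_deriv le_rfl
  -- first derivative of x^4 * p₁ x
  have hD1 : ∀ z : ℝ, HasDerivAt (fun x => x ^ 4 * p₁ x)
      (4 * z ^ 3 * p₁ z + z ^ 4 * deriv p₁ z) z := by
    intro z
    have h := (hasDerivAt_pow 4 z).fun_mul (hdiff z).hasDerivAt
    exact h.congr_deriv (by push_cast; ring)
  have hd1eq : deriv (fun x => x ^ 4 * p₁ x) =
      fun z => 4 * z ^ 3 * p₁ z + z ^ 4 * deriv p₁ z := by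
    funext z; exact (hD1 z).deriv
  have hD2 : ∀ z : ℝ, deriv (deriv fun x => x ^ 4 * p₁ x) z =
      12 * z ^ 2 * p₁ z + 8 * z ^ 3 * deriv p₁ z + z ^ 4 * deriv (deriv p₁) z := by
    intro z
    rw [hd1eq]
    have h1 : HasDerivAt (fun x : ℝ => 4 * x ^ 3 * p₁ x)
        (4 * (3 * z ^ 2) * p₁ z + 4 * z ^ 3 * deriv p₁ z) z := by
      have := ((hasDerivAt_pow 3 z).const_mul 4).fun_mul (hdiff z).hasDerivAt
      exact this.congr_deriv (by push_cast; ring)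
    have h2' : HasDerivAt (fun x : ℝ => x ^ 4 * deriv p₁ x)
        (4 * z ^ 3 * deriv p₁ z + z ^ 4 * deriv (deriv p₁) z) z := by
      have := (hasDerivAt_pow 4 z).fun_mul (hdiff1 z).hasDerivAt
      exact this.congr_deriv (by push_cast; ring)
    have := (h1.fun_add h2').deriv
    rw [this]; ring
  set F : ℝ → ℝ := fun z =>
    z * (z - 1) * deriv (deriv p₁) z +
      (-5 - 2 * z * (2 * s - 3) + 2 * z ^ 2 * s) * deriv p₁ z +
      (6 - l * (l + 1) - 10 * s - 2 * z * s * (2 * s - 3)) * p₁ z with hF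
  have key : ∀ z : ℝ,
      z * (z - 1) * deriv (deriv fun x => x ^ 4 * p₁ x) z +
        (3 - 2 * z * (2 * s + 1) + 2 * z ^ 2 * s) * deriv (fun x => x ^ 4 * p₁ x) z +
        (2 - l * (l + 1) + 6 * s - 2 * z * s * (2 * s + 1)) * (z ^ 4 * p₁ z)
      = z ^ 4 * F z := by
    intro z
    rw [hD2, hd1eq, hF]
    ring
  constructor
  · intro h z
    have hFz : F z = 0 := h z
    rw [key z, hFz, mul_zero]
  · intro h
    have hFcont : Continuous F := by
      fun_prop
    have hzero : ∀ z : ℝ, z ≠ 0 → F z = 0 := by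
      intro z hz
      have := h z
      rw [key z] at this
      exact (mul_eq_zero.mp this).resolve_left (pow_ne_zero 4 hz)
    have : ∀ z : ℝ, F z = 0 := by
      have hdense : Dense ({(0 : ℝ)}ᶜ) := dense_compl_singleton 0
      intro z
      have : Set.EqOn F (fun _ => (0 : ℝ)) (Set.univ) := by
        have := hFcont.ext_on hdense continuous_const
          (fun x hx => hzero x hx)
        intro x _
        exact congrFun this x
      exact this (Set.mem_univ z)
    exact this
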